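/- Over a field of characteristic zero, the space of primitive elements of the tensor Hopf algebra (T(V), concatenation, unshuffle coproduct) is exactly the free Lie algebra L(V): x satisfies Δx = x⊗1 + 1⊗x if and only if x ∈ L(V). -/

import Mathlib

open TensorProduct

variable (K : Type*) [Field K] [CharZero K]
variable {V : Type*} [AddCommGroup V] [Module K V]

/-- The unshuffle coproduct on the tensor algebra. -/
noncomputable def unshuffle :
    TensorAlgebra K V →ₐ[K] TensorAlgebra K V ⊗[K] TensorAlgebra K V :=
  TensorAlgebra.lift K
    ((Algebra.TensorProduct.includeLeft :
        TensorAlgebra K V →ₐ[K] TensorAlgebra K V ⊗[K] TensorAlgebra K V).toLinearMap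
        ∘ₗ TensorAlgebra.ι K
      + (Algebra.TensorProduct.includeRight :
        TensorAlgebra K V →ₐ[K] TensorAlgebra K V ⊗[K] TensorAlgebra K V).toLinearMap
        ∘ₗ TensorAlgebra.ι K)

attribute [local instance] LieRing.ofAssociativeRing

namespace Friedrichs

/-- The counit of the tensor algebra. -/
noncomputable def eps : TensorAlgebra K V →ₐ[K] K := TensorAlgebra.lift K 0

@[simp] lemma eps_ι (v : V) : eps K (TensorAlgebra.ι K v) = 0 := by
  simp [eps]

lemma unshuffle_ι (v : V) : unshuffle K (TensorAlgebra.ι K v)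
    = TensorAlgebra.ι K v ⊗ₜ[K] 1 + 1 ⊗ₜ[K] TensorAlgebra.ι K v := by
  simp [unshuffle, TensorAlgebra.lift_ι_apply]

/-- left counit law as an algebra map -/
noncomputable def epsLeft :
    TensorAlgebra K V ⊗[K] TensorAlgebra K V →ₐ[K] TensorAlgebra K V :=
  (Algebra.TensorProduct.lid K (TensorAlgebra K V)).toAlgHom.comp
    (Algebra.TensorProduct.map (eps K) (AlgHom.id K _))

@[simp] lemma epsLeft_tmul (a b : TensorAlgebra K V) :
    epsLeft K (a ⊗ₜ[K] b) = eps K a • b := by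
  simp [epsLeft]

lemma epsLeft_unshuffle (x : TensorAlgebra K V) : epsLeft K (unshuffle K x) = x := by
  have h : (epsLeft K).comp (unshuffle K) = AlgHom.id K (TensorAlgebra K V) := by
    apply TensorAlgebra.hom_ext
    apply LinearMap.ext; intro v
    simp [unshuffle_ι]
  exact DFunLike.congr_fun h x



/-- The primitive elements, as a Lie subalgebra. -/
noncomputable def primitives : LieSubalgebra K (TensorAlgebra K V) :=
  { LinearMap.ker ((unshuffle K).toLinearMap
      - ((TensorProduct.mk K (TensorAlgebra K V) (TensorAlgebra K V)).flip 1
          + TensorProduct.mk K (TensorAlgebra K V) (TensorAlgebra K V) 1)) with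
    lie_mem' := by
      intro a b ha hb
      simp only [Submodule.mem_carrier, SetLike.mem_coe, LinearMap.mem_ker, LinearMap.sub_apply,
        LinearMap.add_apply, LinearMap.flip_apply, TensorProduct.mk_apply,
        AlgHom.toLinearMap_apply, sub_eq_zero] at ha hb ⊢
      rw [Ring.lie_def, map_sub, map_mul, map_mul, ha, hb]
      simp only [mul_add, add_mul, Algebra.TensorProduct.tmul_mul_tmul, one_mul, mul_one,
        sub_tmul, tmul_sub]
      abel }

lemma mem_primitives {x : TensorAlgebra K V} :
    x ∈ primitives K ↔ unshuffle K x = x ⊗ₜ[K] 1 + 1 ⊗ₜ[K] x := by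
  change x ∈ LinearMap.ker _ ↔ _
  simp [LinearMap.mem_ker, sub_eq_zero]



/-- auxiliary generator map for the Euler derivation -/
noncomputable def NAux : V →ₗ[K] Module.End K (TensorAlgebra K V × TensorAlgebra K V) where
  toFun v :=
    ((LinearMap.mulLeft K (TensorAlgebra.ι K v)).comp
        (LinearMap.fst K (TensorAlgebra K V) (TensorAlgebra K V))).prod
      (((LinearMap.mulLeft K (TensorAlgebra.ι K v)).comp
          (LinearMap.snd K (TensorAlgebra K V) (TensorAlgebra K V)))
        + ((LinearMap.mulLeft K (TensorAlgebra.ι K v)).comp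
          (LinearMap.fst K (TensorAlgebra K V) (TensorAlgebra K V))))
  map_add' u v := by
    ext p <;> simp [add_mul] <;> abel
  map_smul' c v := by
    ext p <;> simp [smul_mul_assoc]

@[simp] lemma NAux_apply (v : V) (p : TensorAlgebra K V × TensorAlgebra K V) :
    NAux K v p = (TensorAlgebra.ι K v * p.1,
      TensorAlgebra.ι K v * p.2 + TensorAlgebra.ι K v * p.1) := rfl

noncomputable def Phi : TensorAlgebra K V →ₐ[K]
    Module.End K (TensorAlgebra K V × TensorAlgebra K V) :=
  TensorAlgebra.lift K (NAux K)

@[simp] lemma Phi_ι (v : V) : Phi K (TensorAlgebra.ι K v) = NAux K v :=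
  TensorAlgebra.lift_ι_apply _ _

/-- The Euler ("number") operator on the tensor algebra. -/
noncomputable def NE : TensorAlgebra K V →ₗ[K] TensorAlgebra K V where
  toFun x := (Phi K x ((1 : TensorAlgebra K V), (0 : TensorAlgebra K V))).2
  map_add' x y := by simp [map_add]
  map_smul' c x := by simp [map_smul]

lemma Phi_apply (x : TensorAlgebra K V) (a b : TensorAlgebra K V) :
    Phi K x (a, b) = (x * a, NE K x * a + x * b) := by
  induction x using TensorAlgebra.induction generalizing a b with
  | algebraMap r =>
      simp [NE, Algebra.algebraMap_eq_smul_one, Prod.smul_mk, smul_mul_assoc]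
  | ι v => simp [NE]; abel
  | add x y hx hy => simp [map_add, hx, hy, add_mul]; abel
  | mul x y hx hy =>
      have h1 : NE K (x * y) = NE K x * y + x * NE K y := by
        have e : NE K (x * y) = ((Phi K (x * y)) (1, 0)).2 := rfl
        rw [e, map_mul, Module.End.mul_apply, hy 1 0, hx]
        simp
      rw [map_mul, Module.End.mul_apply, hy a b, hx, h1]
      simp [mul_add, add_mul, mul_assoc]
      abel

@[simp] lemma NE_ι (v : V) : NE K (TensorAlgebra.ι K v) = TensorAlgebra.ι K v := by
  simp [NE]

@[simp] lemma NE_algebraMap (r : K) :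
    NE K (algebraMap K (TensorAlgebra K V) r) = 0 := by
  simp [NE, Algebra.algebraMap_eq_smul_one, Prod.smul_mk]

lemma NE_mul (x y : TensorAlgebra K V) :
    NE K (x * y) = NE K x * y + x * NE K y := by
  have : NE K (x * y) = ((Phi K (x*y)) (1,0)).2 := rfl
  rw [this, map_mul, Module.End.mul_apply, Phi_apply, Phi_apply]
  simp


/-- auxiliary generator map for the Dynkin operator -/
noncomputable def OAux : V →ₗ[K] Module.End K (TensorAlgebra K V × K) where
  toFun v :=
    (((LinearMap.mulLeft K (TensorAlgebra.ι K v)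
        - LinearMap.mulRight K (TensorAlgebra.ι K v)).comp
        (LinearMap.fst K (TensorAlgebra K V) K))
      + ((LinearMap.toSpanSingleton K (TensorAlgebra K V) (TensorAlgebra.ι K v)).comp
        (LinearMap.snd K (TensorAlgebra K V) K))).prod 0
  map_add' u v := by
    ext p <;> simp [add_mul, mul_add, smul_add] <;> abel
  map_smul' c v := by
    ext p <;> simp [smul_mul_assoc, mul_smul_comm, smul_comm c, smul_sub]

@[simp] lemma OAux_apply (v : V) (p : TensorAlgebra K V × K) :
    OAux K v p = (TensorAlgebra.ι K v * p.1 - p.1 * TensorAlgebra.ι K v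
      + p.2 • TensorAlgebra.ι K v, (0 : K)) := rfl

noncomputable def Theta : TensorAlgebra K V →ₐ[K] Module.End K (TensorAlgebra K V × K) :=
  TensorAlgebra.lift K (OAux K)

@[simp] lemma Theta_ι (v : V) : Theta K (TensorAlgebra.ι K v) = OAux K v :=
  TensorAlgebra.lift_ι_apply _ _

/-- The Dynkin right-bracketing operator. -/
noncomputable def omegaD : TensorAlgebra K V →ₗ[K] TensorAlgebra K V where
  toFun x := (Theta K x ((0 : TensorAlgebra K V), (1 : K))).1
  map_add' x y := by simp [map_add]
  map_smul' c x := by simp [map_smul]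

lemma Theta_snd (x : TensorAlgebra K V) (p : TensorAlgebra K V × K) :
    (Theta K x p).2 = eps K x * p.2 := by
  induction x using TensorAlgebra.induction generalizing p with
  | algebraMap r => simp [Algebra.algebraMap_eq_smul_one, Prod.smul_mk, smul_eq_mul]
  | ι v => simp
  | add x y hx hy => simp [map_add, hx, hy, add_mul]
  | mul x y hx hy => rw [map_mul, Module.End.mul_apply, hx, hy, map_mul]; ring

@[simp] lemma omegaD_one : omegaD K (1 : TensorAlgebra K V) = 0 := by
  simp [omegaD]

@[simp] lemma omegaD_algebraMap (r : K) :
    omegaD K (algebraMap K (TensorAlgebra K V) r) = 0 := by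
  simp [omegaD, Algebra.algebraMap_eq_smul_one, Prod.smul_mk]

@[simp] lemma omegaD_ι (v : V) : omegaD K (TensorAlgebra.ι K v) = TensorAlgebra.ι K v := by
  simp [omegaD]

lemma omegaD_ι_mul (v : V) (y : TensorAlgebra K V) :
    omegaD K (TensorAlgebra.ι K v * y)
      = TensorAlgebra.ι K v * omegaD K y - omegaD K y * TensorAlgebra.ι K v
        + eps K y • TensorAlgebra.ι K v := by
  have e : omegaD K (TensorAlgebra.ι K v * y)
      = ((Theta K (TensorAlgebra.ι K v * y)) (0, 1)).1 := rfl
  rw [e, map_mul, Module.End.mul_apply, Theta_ι]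
  have h2 : (Theta K y (0, 1)).2 = eps K y := by rw [Theta_snd]; ring
  have h1 : (Theta K y ((0 : TensorAlgebra K V), (1:K)))
      = (omegaD K y, eps K y) := by
    rw [← h2]; rfl
  rw [h1, OAux_apply]



/-- the free Lie algebra inside the tensor algebra -/
noncomputable def LV : LieSubalgebra K (TensorAlgebra K V) :=
  LieSubalgebra.lieSpan K (TensorAlgebra K V)
    (Set.range (TensorAlgebra.ι K : V →ₗ[K] TensorAlgebra K V))

lemma ι_mem_LV (v : V) : TensorAlgebra.ι K v ∈ LV K :=
  LieSubalgebra.subset_lieSpan ⟨v, rfl⟩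

lemma omegaD_mem (x : TensorAlgebra K V) : omegaD K x ∈ LV K := by
  have key : ∀ y : TensorAlgebra K V, ∀ p : TensorAlgebra K V × K,
      p.1 ∈ LV K → (Theta K y p).1 ∈ LV K := by
    intro y
    induction y using TensorAlgebra.induction with
    | algebraMap r =>
        intro p hp
        rw [AlgHom.commutes]
        have : (algebraMap K (Module.End K (TensorAlgebra K V × K)) r) p = r • p := by
          simp [Algebra.algebraMap_eq_smul_one]
        rw [this]
        exact Submodule.smul_mem _ _ hp
    | ι v =>
        intro p hp
        rw [Theta_ι, OAux_apply]
        refine add_mem ?_ (Submodule.smul_mem (LV K).toSubmodule _ (ι_mem_LV K v))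
        have : TensorAlgebra.ι K v * p.1 - p.1 * TensorAlgebra.ι K v
            = ⁅TensorAlgebra.ι K v, p.1⁆ := (Ring.lie_def _ _).symm
        rw [this]
        exact (LV K).lie_mem (ι_mem_LV K v) hp
    | mul a b ha hb =>
        intro p hp
        rw [map_mul, Module.End.mul_apply]
        exact ha _ (hb p hp)
    | add a b ha hb =>
        intro p hp
        rw [map_add, LinearMap.add_apply]
        exact add_mem (ha p hp) (hb p hp)
  exact key x (0, 1) (zero_mem _)

lemma NE_lie (a b : TensorAlgebra K V) :
    NE K ⁅a, b⁆ = ⁅NE K a, b⁆ + ⁅a, NE K b⁆ := by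
  simp only [Ring.lie_def, map_sub, NE_mul]
  abel

lemma NE_mem_LV {x : TensorAlgebra K V} (hx : x ∈ LV K) : NE K x ∈ LV K := by
  let S : LieSubalgebra K (TensorAlgebra K V) :=
    { ((LV K).toSubmodule ⊓ Submodule.comap (NE K) (LV K).toSubmodule :
        Submodule K (TensorAlgebra K V)) with
      lie_mem' := by
        intro a b ha hb
        simp only [Submodule.mem_carrier, SetLike.mem_coe, Submodule.mem_inf,
          Submodule.mem_comap, LieSubalgebra.mem_toSubmodule] at ha hb ⊢
        refine ⟨(LV K).lie_mem ha.1 hb.1, ?_⟩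
        rw [NE_lie]
        exact add_mem ((LV K).lie_mem ha.2 hb.1) ((LV K).lie_mem ha.1 hb.2) }
  have hle : LV K ≤ S := by
    rw [LV, LieSubalgebra.lieSpan_le]
    rintro - ⟨v, rfl⟩
    show _ ∈ S
    have : TensorAlgebra.ι K v ∈ (LV K).toSubmodule ⊓
        Submodule.comap (NE K) (LV K).toSubmodule := by
      simp only [Submodule.mem_inf, Submodule.mem_comap, LieSubalgebra.mem_toSubmodule,
        NE_ι]
      exact ⟨ι_mem_LV K v, ι_mem_LV K v⟩
    exact this
  have h2 : x ∈ (LV K).toSubmodule ⊓ Submodule.comap (NE K) (LV K).toSubmodule := hle hx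
  exact (Submodule.mem_inf.mp h2).2



/-- the convolution `ω ⋆ id` -/
noncomputable def convMap : TensorAlgebra K V →ₗ[K] TensorAlgebra K V :=
  LinearMap.mul' K (TensorAlgebra K V) ∘ₗ
    (TensorProduct.map (omegaD K) LinearMap.id) ∘ₗ (unshuffle K).toLinearMap

lemma key_step (v : V) (t : TensorAlgebra K V ⊗[K] TensorAlgebra K V) :
    LinearMap.mul' K (TensorAlgebra K V) (TensorProduct.map (omegaD K) LinearMap.id
        (unshuffle K (TensorAlgebra.ι K v) * t))
      = TensorAlgebra.ι K v
          * LinearMap.mul' K (TensorAlgebra K V) (TensorProduct.map (omegaD K) LinearMap.id t)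
        + TensorAlgebra.ι K v * epsLeft K t := by
  induction t with
  | zero => simp
  | tmul y z =>
      rw [unshuffle_ι]
      simp only [add_mul, Algebra.TensorProduct.tmul_mul_tmul, one_mul, mul_one, map_add,
        TensorProduct.map_tmul, LinearMap.mul'_apply, LinearMap.id_coe, id_eq, epsLeft_tmul,
        omegaD_ι_mul]
      simp only [sub_mul, add_mul, smul_mul_assoc, mul_smul_comm, mul_assoc]
      abel
  | add t1 t2 h1 h2 =>
      simp only [mul_add, map_add, h1, h2]
      abel

lemma convMap_ι_mul (v : V) (x : TensorAlgebra K V) :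
    convMap K (TensorAlgebra.ι K v * x)
      = TensorAlgebra.ι K v * convMap K x + TensorAlgebra.ι K v * x := by
  simp only [convMap, LinearMap.comp_apply, AlgHom.toLinearMap_apply, map_mul]
  rw [key_step, epsLeft_unshuffle]

lemma convMap_eq_NE (x : TensorAlgebra K V) : convMap K x = NE K x := by
  have htop : x ∈ (⨆ n : ℕ,
      (LinearMap.range (TensorAlgebra.ι K : V →ₗ[K] TensorAlgebra K V)) ^ n) := by
    rw [(DirectSum.Decomposition.isInternal
      (fun n : ℕ => (LinearMap.range (TensorAlgebra.ι K : V →ₗ[K] TensorAlgebra K V)) ^ n)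
      ).submodule_iSup_eq_top]
    trivial
  refine Submodule.iSup_induction _ (motive := fun y => convMap K y = NE K y) htop
    (fun n y hy => ?_) (by simp)
    (fun a b ha hb => by
      show convMap K (a + b) = NE K (a + b)
      rw [map_add, map_add]; rw [show convMap K a = NE K a from ha,
        show convMap K b = NE K b from hb])
  refine Submodule.pow_induction_on_left _ (fun r => ?_) (fun a b ha hb => ?_)
    (fun m hm a ha => ?_) hy
  · simp only [convMap, LinearMap.comp_apply, AlgHom.toLinearMap_apply, AlgHom.commutes,
      Algebra.TensorProduct.algebraMap_apply, TensorProduct.map_tmul, omegaD_algebraMap,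
      NE_algebraMap, TensorProduct.zero_tmul, map_zero]
  · show convMap K (a + b) = NE K (a + b)
    rw [map_add, map_add, ha, hb]
  · obtain ⟨v, rfl⟩ := hm
    rw [convMap_ι_mul, ha, NE_mul, NE_ι]
    abel

lemma NE_graded {n : ℕ} {y : TensorAlgebra K V}
    (hy : y ∈ (LinearMap.range (TensorAlgebra.ι K : V →ₗ[K] TensorAlgebra K V)) ^ n) :
    NE K y = (n : K) • y := by
  induction hy using Submodule.pow_induction_on_left' with
  | algebraMap r => simp
  | add a b i ha hb iha ihb => rw [map_add, iha, ihb, smul_add]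
  | mem_mul m hm i z hz ih =>
      obtain ⟨v, rfl⟩ := hm
      rw [NE_mul, NE_ι, ih, mul_smul_comm]
      push_cast
      rw [add_smul, one_smul]
      abel

lemma eps_graded {n : ℕ} (hn : n ≠ 0) {y : TensorAlgebra K V}
    (hy : y ∈ (LinearMap.range (TensorAlgebra.ι K : V →ₗ[K] TensorAlgebra K V)) ^ n) :
    eps K y = 0 := by
  obtain ⟨m, rfl⟩ := Nat.exists_eq_succ_of_ne_zero hn
  rw [pow_succ] at hy
  refine Submodule.mul_induction_on hy (fun a _ b hb => ?_) (fun a b ha hb => ?_)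
  · obtain ⟨v, rfl⟩ := hb
    rw [map_mul, eps_ι, mul_zero]
  · rw [map_add, ha, hb, add_zero]



lemma pow_eig (f : Module.End K (TensorAlgebra K V)) (c : K) (y : TensorAlgebra K V)
    (h : f y = c • y) (n : ℕ) : (f ^ n) y = c ^ n • y := by
  induction n with
  | zero => simp
  | succ n ih =>
      rw [pow_succ, Module.End.mul_apply, h, map_smul, ih, smul_smul, pow_succ, mul_comm]

lemma aeval_eig (f : Module.End K (TensorAlgebra K V)) (c : K) (y : TensorAlgebra K V)
    (h : f y = c • y) (q : Polynomial K) :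
    Polynomial.aeval f q y = Polynomial.eval c q • y := by
  induction q using Polynomial.induction_on' with
  | add p q hp hq => rw [map_add, LinearMap.add_apply, hp, hq, Polynomial.eval_add, add_smul]
  | monomial n a =>
      rw [Polynomial.aeval_monomial, Polynomial.eval_monomial, Module.End.mul_apply,
        pow_eig K f c y h n, map_smul, Module.algebraMap_end_apply, smul_smul, mul_comm]

lemma aeval_mem (f : Module.End K (TensorAlgebra K V)) (hf : ∀ y ∈ LV K, f y ∈ LV K)
    (q : Polynomial K) {y : TensorAlgebra K V} (hy : y ∈ LV K) :
    Polynomial.aeval f q y ∈ LV K := by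
  have hpow : ∀ n : ℕ, (f ^ n) y ∈ LV K := by
    intro n
    induction n with
    | zero => simpa using hy
    | succ n ih => rw [pow_succ', Module.End.mul_apply]; exact hf _ ih
  induction q using Polynomial.induction_on' with
  | add p q hp hq =>
      rw [map_add, LinearMap.add_apply]
      exact add_mem hp hq
  | monomial n a =>
      rw [Polynomial.aeval_monomial, Module.End.mul_apply, Module.algebraMap_end_apply]
      exact Submodule.smul_mem ((LV K).toSubmodule) _ (hpow n)


end Friedrichs

/-- Friedrichs' criterion: over a field of characteristic zero, the primitive elements
of the tensor Hopf algebra are exactly the elements of the free Lie algebra, i.e. the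
smallest Lie subalgebra of T(V) (with bracket [x,y] = xy - yx) containing V. -/
theorem primitive_iff_lie (x : TensorAlgebra K V) :
    x ∈ LieSubalgebra.lieSpan K (TensorAlgebra K V)
        (Set.range (TensorAlgebra.ι K : V →ₗ[K] TensorAlgebra K V))
      ↔ unshuffle K x
          = x ⊗ₜ[K] (1 : TensorAlgebra K V) + (1 : TensorAlgebra K V) ⊗ₜ[K] x := by
  constructor
  · intro hx
    have hle : LieSubalgebra.lieSpan K (TensorAlgebra K V)
        (Set.range (TensorAlgebra.ι K : V →ₗ[K] TensorAlgebra K V))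
        ≤ Friedrichs.primitives K := by
      rw [LieSubalgebra.lieSpan_le]
      rintro - ⟨v, rfl⟩
      rw [SetLike.mem_coe, Friedrichs.mem_primitives]
      exact Friedrichs.unshuffle_ι K v
    exact (Friedrichs.mem_primitives K).mp (hle hx)
  · intro h
    classical
    show x ∈ Friedrichs.LV K
    -- the counit vanishes on x
    have heps : Friedrichs.eps K x = 0 := by
      have h1 := Friedrichs.epsLeft_unshuffle K x
      rw [h, map_add, Friedrichs.epsLeft_tmul, Friedrichs.epsLeft_tmul, map_one,
        one_smul] at h1
      have h2 : Friedrichs.eps K x • (1 : TensorAlgebra K V) = 0 := by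
        have := add_eq_right.mp h1
        simpa using this
      rcases smul_eq_zero.mp h2 with h3 | h3
      · exact h3
      · exact absurd h3 one_ne_zero
    -- ω x = N x
    have hconv : Friedrichs.convMap K x = Friedrichs.omegaD K x := by
      simp only [Friedrichs.convMap, LinearMap.comp_apply, AlgHom.toLinearMap_apply]
      rw [h]
      simp
    have hNx : Friedrichs.NE K x ∈ Friedrichs.LV K := by
      rw [← Friedrichs.convMap_eq_NE, hconv]
      exact Friedrichs.omegaD_mem K x
    -- the grading
    set 𝒜 : ℕ → Submodule K (TensorAlgebra K V) :=
      fun n => (LinearMap.range (TensorAlgebra.ι K : V →ₗ[K] TensorAlgebra K V)) ^ n with h𝒜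
    -- the degree-zero component of x vanishes
    have h0 : (DirectSum.decompose 𝒜 x 0 : TensorAlgebra K V) = 0 := by
      have hm : (DirectSum.decompose 𝒜 x 0 : TensorAlgebra K V) ∈ (1 : Submodule K _) := by
        have h4 : (DirectSum.decompose 𝒜 x 0 : TensorAlgebra K V)
            ∈ (LinearMap.range (TensorAlgebra.ι K : V →ₗ[K] TensorAlgebra K V)) ^ 0 :=
          (DirectSum.decompose 𝒜 x 0).2
        rwa [pow_zero] at h4
      obtain ⟨r, hr⟩ := Submodule.mem_one.mp hm
      have hepsx : Friedrichs.eps K x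
          = Friedrichs.eps K (DirectSum.decompose 𝒜 x 0 : TensorAlgebra K V) := by
        conv_lhs => rw [← DirectSum.sum_support_decompose 𝒜 x]
        rw [map_sum]
        refine Finset.sum_eq_single 0
          (fun b _ hb0 => Friedrichs.eps_graded K hb0 (DirectSum.decompose 𝒜 x b).2)
          (fun h5 => by rw [DFinsupp.notMem_support_iff.mp h5]; simp)
      rw [heps, ← hr] at hepsx
      have : r = 0 := by simpa [Friedrichs.eps] using hepsx.symm
      rw [← hr, this, map_zero]
    have h0support : 0 ∉ (DirectSum.decompose 𝒜 x).support := by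
      rw [DFinsupp.notMem_support_iff]
      exact Subtype.ext h0
    -- the interpolation polynomial
    set s : Finset ℕ := insert 0 (DirectSum.decompose 𝒜 x).support with hs
    have hinj : Set.InjOn (fun n : ℕ => (n : K)) ↑s :=
      fun a _ b _ hab => Nat.cast_injective hab
    set q : Polynomial K := Lagrange.interpolate s (fun n : ℕ => (n : K))
      (fun n => if n = 0 then 0 else 1) with hq
    have hq0 : Polynomial.eval ((0 : ℕ) : K) q = 0 := by
      rw [hq, Lagrange.eval_interpolate_at_node _ hinj (Finset.mem_insert_self 0 _)]
      simp
    have hqn : ∀ n ∈ (DirectSum.decompose 𝒜 x).support,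
        Polynomial.eval ((n : ℕ) : K) q = 1 := by
      intro n hn
      rw [hq, Lagrange.eval_interpolate_at_node _ hinj (Finset.mem_insert_of_mem hn)]
      have hn0 : n ≠ 0 := fun e => h0support (e ▸ hn)
      simp [hn0]
    -- q(N) x = x
    have hqx : Polynomial.aeval (Friedrichs.NE K) q x = x := by
      conv_lhs => rw [← DirectSum.sum_support_decompose 𝒜 x]
      rw [map_sum]
      conv_rhs => rw [← DirectSum.sum_support_decompose 𝒜 x]
      refine Finset.sum_congr rfl fun n hn => ?_
      rw [Friedrichs.aeval_eig K (Friedrichs.NE K) ((n : ℕ) : K) _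
        (Friedrichs.NE_graded K (DirectSum.decompose 𝒜 x n).2) q, hqn n hn, one_smul]
    -- q is divisible by X
    have hdvd : Polynomial.X ∣ q := by
      rw [Polynomial.X_dvd_iff, Polynomial.coeff_zero_eq_eval_zero]
      simpa using hq0
    obtain ⟨r, hr⟩ := hdvd
    have hfin : Polynomial.aeval (Friedrichs.NE K) q x
        = Polynomial.aeval (Friedrichs.NE K) r (Friedrichs.NE K x) := by
      rw [hr, mul_comm, map_mul, Polynomial.aeval_X, Module.End.mul_apply]
    rw [← hqx, hfin]
    exact Friedrichs.aeval_mem K _ (fun y hy => Friedrichs.NE_mem_LV K hy) r hNx
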